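/- Let A = (E, ≤, ↗, λ) be an asymmetric event structure and X ⊆ E a combinable set of events. Then A and its folding A/X are history preserving bisimilar; i.e., the folding operation on AESs preserves hp-bisimilarity. -/

import Mathlib

/-- Restriction of a binary relation to a set. -/
def RelRestrict {G : Type*} (r : G → G → Prop) (S : Set G) : G → G → Prop :=
  fun a b => a ∈ S ∧ b ∈ S ∧ r a b

/-- A binary relation is acyclic on a set: there is no cycle lying within the set. -/
def AcyclicOn {G : Type*} (r : G → G → Prop) (S : Set G) : Prop :=
  ∀ x, ¬ Relation.TransGen (RelRestrict r S) x x

/-- The data of a labelled asymmetric event structure (AES). -/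
structure AES (E : Type*) (Λ : Type*) where
  le : E → E → Prop
  ac : E → E → Prop
  lab : E → Λ

namespace AES

variable {E : Type*} {Λ : Type*}

/-- Strict causality. -/
def lt (A : AES E Λ) (e e' : E) : Prop := A.le e e' ∧ e ≠ e'

/-- The set of causes `⌊e⌋`. -/
def causes (A : AES E Λ) (e : E) : Set E := {e' | A.le e' e}

/-- `⌊Y⌋`, the causes of a set of events. -/
def causesSet (A : AES E Λ) (Y : Set E) : Set E := ⋃ y ∈ Y, A.causes y

/-- The axioms making the data an asymmetric event structure. -/
structure IsAES (A : AES E Λ) : Prop where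
  le_refl : ∀ e, A.le e e
  le_trans : ∀ e e' e'', A.le e e' → A.le e' e'' → A.le e e''
  le_antisymm : ∀ e e', A.le e e' → A.le e' e → e = e'
  causes_finite : ∀ e, (A.causes e).Finite
  lt_ac : ∀ e e', A.lt e e' → A.ac e e'
  ac_heredity : ∀ e e' e'', A.ac e e' → A.lt e' e'' → A.ac e e''
  ac_acyclic : ∀ e, AcyclicOn A.ac (A.causes e)
  cyclic_ac : ∀ e e', ¬ AcyclicOn A.ac (A.causes e ∪ A.causes e') → A.ac e e'

/-- Conflict on sets of events, inductively generated from cycles of asymmetric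
conflict and closed under hereditarity along causality. -/
inductive SetConflict (A : AES E Λ) : Set E → Prop
  | cycle (e : E) (l : List E) : List.Chain A.ac e (l ++ [e]) →
      SetConflict A {x | x ∈ e :: l}
  | heredity (Y : Set E) (e e' : E) :
      SetConflict A (Y ∪ {e}) → A.le e e' → SetConflict A (Y ∪ {e'})

/-- Binary conflict `e # e'`. -/
def Conflict (A : AES E Λ) (e e' : E) : Prop := A.SetConflict {e, e'}

/-- A set of events is consistent if it contains no two events in conflict. -/
def ConsistentSet (A : AES E Λ) (Y : Set E) : Prop :=
  ∀ e ∈ Y, ∀ e' ∈ Y, ¬ A.Conflict e e'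

/-- Immediate causality `e' <_μ e`. -/
def ltMu (A : AES E Λ) (e' e : E) : Prop :=
  A.lt e' e ∧ ¬ ∃ e'', A.lt e' e'' ∧ A.lt e'' e

/-- Direct asymmetric conflict `e ↗_μ e''`. -/
def acMu (A : AES E Λ) (e e'' : E) : Prop :=
  A.ac e e'' ∧ ¬ ∃ e', A.ac e e' ∧ A.lt e' e''

/-- Direct binary conflict `e #_μ e'`. -/
def confMu (A : AES E Λ) (e e' : E) : Prop := A.acMu e e' ∧ A.acMu e' e

/-- Configurations: finite, causally closed and free of asymmetric-conflict cycles. -/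
def Config (A : AES E Λ) (C : Set E) : Prop :=
  C.Finite ∧ (∀ e ∈ C, A.causes e ⊆ C) ∧ AcyclicOn A.ac C

/-- Similar sets of events. -/
def Similar (A : AES E Λ) (X : Set E) : Prop :=
  ∀ e ∈ X, ∀ e' ∈ X,
    A.lab e = A.lab e' ∧ (e ≠ e' → A.Conflict e e') ∧
    ∀ e'', e'' ∉ X →
      (A.ac e e'' → (A.ac e' e'' ∨ A.ac e'' e)) ∧
      (A.acMu e'' e → A.ac e'' e')

/-- The strict causes `S(X)`. -/
def strictCauses (A : AES E Λ) (X : Set E) : Set E := {e' | ∀ e ∈ X, A.lt e' e}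

/-- The weak predecessors `W(X)`. -/
def weakPred (A : AES E Λ) (X : Set E) : Set E :=
  {e'' | ∃ e ∈ X, ∃ e' ∈ X, A.ac e'' e ∧ ¬ A.ac e' e''} \ (A.strictCauses X ∪ X)

/-- The history `C⟦e⟧` of `e` in a configuration `C`. -/
def history (A : AES E Λ) (C : Set E) (e : E) : Set E :=
  {e' | e' ∈ C ∧ Relation.ReflTransGen (RelRestrict A.ac C) e' e}

/-- The set of possible histories of `e`. -/
def Hist (A : AES E Λ) (e : E) : Set (Set E) :=
  {h | ∃ C, A.Config C ∧ e ∈ C ∧ h = A.history C e}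

/-- Combinable sets of events. -/
def Combinable (A : AES E Λ) (X : Set E) : Prop :=
  A.Similar X ∧
  ∀ Y, Y ⊆ A.weakPred X → A.ConsistentSet Y →
    ∃ e ∈ X, (∀ e' ∈ Y, ¬ A.ac e e') ∧
      ∃ h ∈ A.Hist e, h \ {e} ⊆ A.strictCauses X ∪ A.causesSet Y

/-- The carrier of the folded structure: `(E \ X) ∪ {e_X}`, where the fresh
event `e_X` is encoded as `none`. -/
def foldCarrier (X : Set E) : Set (Option E) :=
  {x | x = none ∨ ∃ e, e ∉ X ∧ x = some e}

/-- Causality of the folded structure. -/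
def foldLe (A : AES E Λ) (X : Set E) : Option E → Option E → Prop
  | some e, some e' => e ∉ X ∧ e' ∉ X ∧ A.le e e'
  | some e, none => e ∈ A.strictCauses X
  | none, some e => e ∉ X ∧ ∃ e' ∈ X, A.lt e' e
  | none, none => True

/-- Asymmetric conflict of the folded structure. -/
def foldAc (A : AES E Λ) (X : Set E) : Option E → Option E → Prop
  | some e, some e' => e ∉ X ∧ e' ∉ X ∧ A.ac e e'
  | some e', none => e' ∉ X ∧ ∀ e ∈ X, A.ac e' e
  | none, some e' => e' ∉ X ∧ ∀ e ∈ X, A.ac e e'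
  | none, none => False

open Classical in
/-- Labelling of the folded structure. -/
noncomputable def foldLab [Inhabited Λ] (A : AES E Λ) (X : Set E) : Option E → Λ
  | some e => A.lab e
  | none => if h : X.Nonempty then A.lab h.some else default

open Classical in
/-- The folding morphism `f : E → E/X`. -/
noncomputable def foldMap (X : Set E) : E → Option E :=
  fun e => if e ∈ X then none else some e

end AES

/-- An event structure with asymmetric conflict, presented with an explicit
carrier set of events (used for the folded structure, whose events form a
subset of `Option E`). -/
structure ES (G : Type*) (Λ : Type*) where
  carrier : Set G
  le : G → G → Prop
  ac : G → G → Prop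
  lab : G → Λ

namespace ES

variable {G : Type*} {Λ : Type*}

/-- Configurations: finite, causally closed subsets of the carrier on which
asymmetric conflict is acyclic. -/
def Config (D : ES G Λ) (C : Set G) : Prop :=
  C ⊆ D.carrier ∧ C.Finite ∧ (∀ x ∈ C, ∀ y ∈ D.carrier, D.le y x → y ∈ C) ∧
  AcyclicOn D.ac C

/-- The extension order on configurations: `C₁ ⊑ C₂` iff `C₁ ⊆ C₂` and no event
of `C₂ \ C₁` is in asymmetric conflict with an event of `C₁`. -/
def Extends (D : ES G Λ) (C₁ C₂ : Set G) : Prop :=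
  C₁ ⊆ C₂ ∧ ∀ e ∈ C₁, ∀ e' ∈ C₂, e' ∉ C₁ → ¬ D.ac e' e

end ES

/-- `g` is a label-preserving isomorphism between the configuration `C₁` of
`D₁`, ordered by `(↗₁|_{C₁})*`, and the configuration `C₂` of `D₂`, ordered by
`(↗₂|_{C₂})*`. -/
def IsPosetIso {G₁ G₂ Λ : Type*} (D₁ : ES G₁ Λ) (D₂ : ES G₂ Λ)
    (C₁ : Set G₁) (C₂ : Set G₂) (g : G₁ → G₂) : Prop :=
  Set.InjOn g C₁ ∧ g '' C₁ = C₂ ∧ (∀ e ∈ C₁, D₂.lab (g e) = D₁.lab e) ∧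
  ∀ e ∈ C₁, ∀ e' ∈ C₁,
    (Relation.ReflTransGen (RelRestrict D₁.ac C₁) e e' ↔
      Relation.ReflTransGen (RelRestrict D₂.ac C₂) (g e) (g e'))

/-- History preserving bisimulations between (asymmetric) event structures:
sets of triples `(C₁, g, C₂)` of configurations related by a label-preserving
order isomorphism `g`, containing the empty triple, such that every one-event
extension on either side can be matched on the other side by an equally
labelled event, extending the isomorphism. -/
def IsHpBisim {G₁ G₂ Λ : Type*} (D₁ : ES G₁ Λ) (D₂ : ES G₂ Λ)
    (R : Set (Set G₁ × (G₁ → G₂) × Set G₂)) : Prop :=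
  (∀ t ∈ R, D₁.Config t.1 ∧ D₂.Config t.2.2 ∧ IsPosetIso D₁ D₂ t.1 t.2.2 t.2.1) ∧
  (∃ g, ((∅ : Set G₁), g, (∅ : Set G₂)) ∈ R) ∧
  ∀ C₁ g C₂, (C₁, g, C₂) ∈ R →
    (∀ e₁ ∈ D₁.carrier, D₁.Extends C₁ (C₁ ∪ {e₁}) → D₁.Config (C₁ ∪ {e₁}) →
      ∃ e₂ ∈ D₂.carrier, D₂.lab e₂ = D₁.lab e₁ ∧
        ∃ g', (∀ x ∈ C₁, g' x = g x) ∧ (C₁ ∪ {e₁}, g', C₂ ∪ {e₂}) ∈ R) ∧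
    (∀ e₂ ∈ D₂.carrier, D₂.Extends C₂ (C₂ ∪ {e₂}) → D₂.Config (C₂ ∪ {e₂}) →
      ∃ e₁ ∈ D₁.carrier, D₁.lab e₁ = D₂.lab e₂ ∧
        ∃ g', (∀ x ∈ C₁, g' x = g x) ∧ (C₁ ∪ {e₁}, g', C₂ ∪ {e₂}) ∈ R)

namespace AES

variable {E : Type*} {Λ : Type*}

/-- An AES viewed as a carrier-based event structure (carrier: all events). -/
def toES (A : AES E Λ) : ES E Λ := ⟨Set.univ, A.le, A.ac, A.lab⟩

/-- The folded structure `A/X` as a carrier-based event structure. -/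
noncomputable def foldES [Inhabited Λ] (A : AES E Λ) (X : Set E) : ES (Option E) Λ :=
  ⟨foldCarrier X, A.foldLe X, A.foldAc X, A.foldLab X⟩

end AES
section FoldProof

open Relation

variable {E : Type*} {Λ : Type*}

lemma transGen_restrict_mem {G : Type*} {r : G → G → Prop} {S : Set G} {x y : G}
    (h : Relation.TransGen (RelRestrict r S) x y) : x ∈ S ∧ y ∈ S := by
  induction h with
  | single h => exact ⟨h.1, h.2.1⟩
  | tail h1 h2 ih => exact ⟨ih.1, h2.2.1⟩

lemma acyclicOn_mono {G : Type*} {r : G → G → Prop} {S T : Set G} (hST : S ⊆ T)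
    (h : AcyclicOn r T) : AcyclicOn r S := by
  intro x hx
  exact h x (Relation.TransGen.mono (p := RelRestrict r T) (fun a b hab => ⟨hST hab.1, hST hab.2.1, hab.2.2⟩) x x hx)

lemma chain_transGen {r : E → E → Prop} {S : Set E} {e : E} :
    ∀ (l : List E) (a : E), List.Chain r a (l ++ [e]) → a ∈ S → (∀ x ∈ l, x ∈ S) → e ∈ S →
      Relation.TransGen (RelRestrict r S) a e := by
  intro l
  induction l with
  | nil =>
      intro a h ha _ he
      cases h with
      | cons_cons h1 _ => exact Relation.TransGen.single ⟨ha, he, h1⟩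
  | cons b l ih =>
      intro a h ha hl he
      cases h with
      | cons_cons h1 h2 =>
          have hb : b ∈ S := hl b (by simp)
          exact Relation.TransGen.head ⟨ha, hb, h1⟩ (ih b h2 hb (fun x hx => hl x (by simp [hx])) he)

lemma acyclic_insert {r : E → E → Prop} {C : Set E} {e : E}
    (hacy : AcyclicOn r C) (hee : ¬ r e e) (hout : ∀ c ∈ C, ¬ r e c) :
    AcyclicOn r (C ∪ {e}) := by
  have key : ∀ x y, Relation.TransGen (RelRestrict r (C ∪ {e})) x y → x ∈ C → y ∈ C →
      Relation.TransGen (RelRestrict r C) x y := by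
    intro x y h
    induction h with
    | single h => exact fun hx hy => Relation.TransGen.single ⟨hx, hy, h.2.2⟩
    | @tail b c h1 h2 ih =>
        intro hx hy
        have hb : b ∈ C := by
          rcases h2.1 with hb | hb
          · exact hb
          · exact absurd h2.2.2 (by rw [Set.mem_singleton_iff] at hb; subst hb; exact hout c hy)
        exact Relation.TransGen.tail (ih hx hb) ⟨hb, hy, h2.2.2⟩
  intro x hx
  have hxm : x ∈ C ∪ {e} := (transGen_restrict_mem hx).1
  rcases hxm with hxC | hxe
  · exact hacy x (key x x hx hxC hxC)
  · rw [Set.mem_singleton_iff] at hxe; subst hxe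
    obtain ⟨c, hc, _⟩ := Relation.TransGen.head'_iff.mp hx
    rcases hc.2.1 with hcC | hce
    · exact hout c hcC hc.2.2
    · rw [Set.mem_singleton_iff] at hce; subst hce; exact hee hc.2.2

namespace AES

variable {A : AES E Λ}

lemma ac_irrefl (hA : A.IsAES) (e : E) : ¬ A.ac e e := fun h =>
  hA.ac_acyclic e e (Relation.TransGen.single ⟨hA.le_refl e, hA.le_refl e, h⟩)

lemma config_no_conflict (hA : A.IsAES) {C : Set E} (hC : A.Config C) :
    ∀ Z, A.SetConflict Z → ¬ Z ⊆ C := by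
  intro Z hZ
  induction hZ with
  | cycle e l hch =>
      intro hsub
      have he : e ∈ C := hsub (by simp)
      exact hC.2.2 e (chain_transGen l e hch he (fun x hx => hsub (by simp [hx])) he)
  | heredity Y e e' hc hle ih =>
      intro hsub
      have he' : e' ∈ C := hsub (Set.mem_union_right _ rfl)
      have he : e ∈ C := hC.2.1 e' he' hle
      exact ih (Set.union_subset (fun y hy => hsub (Set.mem_union_left _ hy))
        (by simpa using he))

lemma setConflict_cycle (hA : A.IsAES) :
    ∀ Z, A.SetConflict Z → ∃ x, Relation.TransGen (RelRestrict A.ac (A.causesSet Z)) x x := by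
  intro Z hZ
  induction hZ with
  | cycle e l hch =>
      have hmem : ∀ x, x ∈ e :: l → x ∈ A.causesSet {y | y ∈ e :: l} := by
        intro x hx
        exact Set.mem_biUnion hx (hA.le_refl x)
      exact ⟨e, chain_transGen l e hch (hmem e (by simp))
        (fun x hx => hmem x (by simp [hx])) (hmem e (by simp))⟩
  | heredity Y e e' hc hle ih =>
      obtain ⟨x, hx⟩ := ih
      refine ⟨x, Relation.TransGen.mono (p := RelRestrict A.ac (A.causesSet (Y ∪ {e'}))) (fun a b hab => ?_) x x hx⟩
      have hsub : A.causesSet (Y ∪ {e}) ⊆ A.causesSet (Y ∪ {e'}) := by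
        intro z hz
        rw [AES.causesSet, Set.mem_iUnion₂] at hz ⊢
        obtain ⟨y, hy, hzy⟩ := hz
        rcases hy with hy | hy
        · exact ⟨y, Set.mem_union_left _ hy, hzy⟩
        · rw [Set.mem_singleton_iff] at hy; subst hy
          exact ⟨e', Set.mem_union_right _ rfl, hA.le_trans z y e' hzy hle⟩
      exact ⟨hsub hab.1, hsub hab.2.1, hab.2.2⟩

lemma conflict_cyclic (hA : A.IsAES) {a b : E} (h : A.Conflict a b) :
    ¬ AcyclicOn A.ac (A.causes a ∪ A.causes b) := by
  obtain ⟨x, hx⟩ := setConflict_cycle hA _ h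
  have hset : A.causesSet {a, b} = A.causes a ∪ A.causes b := by
    simp [AES.causesSet]
  rw [hset] at hx
  exact fun hacy => hacy x hx

lemma conflict_mutual (hA : A.IsAES) {a b : E} (h : A.Conflict a b) :
    A.ac a b ∧ A.ac b a := by
  have h1 := conflict_cyclic hA h
  have h2 : ¬ AcyclicOn A.ac (A.causes b ∪ A.causes a) := by rwa [Set.union_comm] at h1
  exact ⟨hA.cyclic_ac a b h1, hA.cyclic_ac b a h2⟩

lemma conflict_le_single {c x : E} (h : A.Conflict c x) (hle : A.le c x) :
    A.SetConflict {x} := by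
  have hcx : A.SetConflict ({x} ∪ {c}) := by
    rw [Set.singleton_union, Set.pair_comm]; exact h
  have h2 := AES.SetConflict.heredity {x} c x hcx hle
  rwa [Set.union_self] at h2

end AES

end FoldProof
section FoldProof2

open Relation AES

variable {E : Type*} {Λ : Type*} {A : AES E Λ} {X : Set E}

lemma foldMap_mem {e : E} (he : e ∈ X) : foldMap X e = none := by
  simp [AES.foldMap, he]

lemma foldMap_not_mem {e : E} (he : e ∉ X) : foldMap X e = some e := by
  simp [AES.foldMap, he]

lemma foldMap_eq_none {e : E} (h : foldMap X e = none) : e ∈ X := by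
  by_contra hx
  rw [foldMap_not_mem hx] at h
  exact Option.some_ne_none e h

lemma foldMap_eq_some {e a : E} (h : foldMap X e = some a) : e ∉ X ∧ e = a := by
  by_cases hx : e ∈ X
  · rw [foldMap_mem hx] at h; exact absurd h (by simp)
  · rw [foldMap_not_mem hx] at h; exact ⟨hx, by injection h⟩

namespace AES

/-- The two events of `X` in a configuration coincide. -/
lemma rep_unique (hA : A.IsAES) (hS : A.Similar X) {C : Set E} (hC : A.Config C)
    {a b : E} (ha : a ∈ C) (haX : a ∈ X) (hb : b ∈ C) (hbX : b ∈ X) : a = b := by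
  by_contra hne
  have hconf : A.Conflict a b := ((hS a haX b hbX).2.1 hne)
  exact config_no_conflict hA hC _ hconf
    (Set.insert_subset ha (Set.singleton_subset_iff.mpr hb))

/-- If `x ∈ C ∩ X` then no other member of `X` is a strict cause of `x`. -/
lemma cause_in_X_absurd (hA : A.IsAES) (hS : A.Similar X) {C : Set E} (hC : A.Config C)
    {x c : E} (hx : x ∈ C) (hxX : x ∈ X) (hcX : c ∈ X) (hlt : A.lt c x) : False := by
  have hne : c ≠ x := hlt.2
  have hconf : A.Conflict c x := (hS c hcX x hxX).2.1 hne
  exact config_no_conflict hA hC _ (conflict_le_single hconf hlt.1)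
    (Set.singleton_subset_iff.mpr hx)

lemma fold_ac_pull (hA : A.IsAES) {C : Set E} {a b : E}
    (ha : a ∈ C) (hb : b ∈ C) (h : A.foldAc X (foldMap X a) (foldMap X b)) : A.ac a b := by
  by_cases haX : a ∈ X <;> by_cases hbX : b ∈ X
  · rw [foldMap_mem haX, foldMap_mem hbX] at h; exact absurd h (by simp [AES.foldAc])
  · rw [foldMap_mem haX, foldMap_not_mem hbX] at h
    simp only [AES.foldAc] at h; exact h.2 a haX
  · rw [foldMap_not_mem haX, foldMap_mem hbX] at h
    simp only [AES.foldAc] at h; exact h.2 b hbX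
  · rw [foldMap_not_mem haX, foldMap_not_mem hbX] at h
    simp only [AES.foldAc] at h; exact h.2.2

/-- Reachability in a configuration. -/
def reach (A : AES E Λ) (C : Set E) (a : E) : Set E :=
  {z | Relation.TransGen (RelRestrict A.ac C) a z}

lemma push_aux (hA : A.IsAES) (hS : A.Similar X) {C : Set E} (hC : A.Config C)
    {b : E} (hb : b ∈ C) (hbX : b ∈ X) :
    ∀ n : ℕ, ∀ a, a ∈ C → a ∉ X → A.ac a b → (A.reach C a).ncard ≤ n →
      Relation.ReflTransGen (RelRestrict (A.foldAc X) (foldMap X '' C))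
        (some a) none := by
  have hnone : none ∈ foldMap X '' C := ⟨b, hb, foldMap_mem hbX⟩
  intro n
  induction n with
  | zero =>
      intro a ha haX hab hcard
      by_cases hmu : A.acMu a b
      · have hall : ∀ x' ∈ X, A.ac a x' := fun x' hx' =>
          ((hS b hbX x' hx').2.2 a haX).2 hmu
        exact Relation.ReflTransGen.single
          ⟨⟨a, ha, foldMap_not_mem haX⟩, hnone, ⟨haX, hall⟩⟩
      · exfalso
        rw [AES.acMu, not_and_or, not_not] at hmu
        obtain ⟨c, hac, hlt⟩ := hmu.resolve_left (not_not_intro hab)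
        have hcC : c ∈ C := hC.2.1 b hb hlt.1
        have hcr : c ∈ A.reach C a := Relation.TransGen.single ⟨ha, hcC, hac⟩
        have : (A.reach C a).Finite := hC.1.subset (fun z hz => (transGen_restrict_mem hz).2)
        have h1 : 0 < (A.reach C a).ncard := (Set.ncard_pos this).mpr ⟨c, hcr⟩
        omega
      -- finiteness for ncard_pos
  | succ n ih =>
      intro a ha haX hab hcard
      by_cases hmu : A.acMu a b
      · have hall : ∀ x' ∈ X, A.ac a x' := fun x' hx' =>
          ((hS b hbX x' hx').2.2 a haX).2 hmu
        exact Relation.ReflTransGen.single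
          ⟨⟨a, ha, foldMap_not_mem haX⟩, hnone, ⟨haX, hall⟩⟩
      · rw [AES.acMu, not_and_or, not_not] at hmu
        obtain ⟨c, hac, hlt⟩ := hmu.resolve_left (not_not_intro hab)
        have hcC : c ∈ C := hC.2.1 b hb hlt.1
        have hcX : c ∉ X := fun h => cause_in_X_absurd hA hS hC hb hbX h hlt
        have hcb : A.ac c b := hA.lt_ac c b hlt
        have hstep : RelRestrict (A.foldAc X) (foldMap X '' C) (some a) (some c) :=
          ⟨⟨a, ha, foldMap_not_mem haX⟩, ⟨c, hcC, foldMap_not_mem hcX⟩, ⟨haX, hcX, hac⟩⟩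
        have hsub : A.reach C c ⊆ A.reach C a :=
          fun z hz => Relation.TransGen.head ⟨ha, hcC, hac⟩ hz
        have hcr : c ∈ A.reach C a := Relation.TransGen.single ⟨ha, hcC, hac⟩
        have hcnot : c ∉ A.reach C c := fun h => hC.2.2 c h
        have hfin : (A.reach C a).Finite :=
          hC.1.subset (fun z hz => (transGen_restrict_mem hz).2)
        have hss : A.reach C c ⊂ A.reach C a := by
          rw [Set.ssubset_def]
          exact ⟨hsub, fun h => hcnot (h hcr)⟩
        have hlt' : (A.reach C c).ncard < (A.reach C a).ncard := Set.ncard_lt_ncard hss hfin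
        exact Relation.ReflTransGen.head hstep
          (ih c hcC hcX hcb (by omega))

lemma fold_ac_push (hA : A.IsAES) (hS : A.Similar X) {C : Set E} (hC : A.Config C)
    {a b : E} (ha : a ∈ C) (hb : b ∈ C) (hab : A.ac a b) :
    Relation.ReflTransGen (RelRestrict (A.foldAc X) (foldMap X '' C))
      (foldMap X a) (foldMap X b) := by
  by_cases haX : a ∈ X <;> by_cases hbX : b ∈ X
  · rcases eq_or_ne a b with rfl | hne
    · exact absurd hab (ac_irrefl hA a)
    · exact absurd (rep_unique hA hS hC ha haX hb hbX) hne
  · -- a ∈ X, b ∉ X : single step none → some b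
    have hall : ∀ x' ∈ X, A.ac x' b := by
      intro x' hx'
      rcases ((hS a haX x' hx').2.2 b hbX).1 hab with h | h
      · exact h
      · have hstep : RelRestrict A.ac C a b := ⟨ha, hb, hab⟩
        have hstep2 : RelRestrict A.ac C b a := ⟨hb, ha, h⟩
        exact absurd (Relation.TransGen.head hstep (Relation.TransGen.single hstep2))
          (hC.2.2 a)
    rw [foldMap_mem haX, foldMap_not_mem hbX]
    exact Relation.ReflTransGen.single
      ⟨⟨a, ha, foldMap_mem haX⟩, ⟨b, hb, foldMap_not_mem hbX⟩, ⟨hbX, hall⟩⟩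
  · rw [foldMap_not_mem haX, foldMap_mem hbX]
    exact push_aux hA hS hC hb hbX (A.reach C a).ncard a ha haX hab le_rfl
  · rw [foldMap_not_mem haX, foldMap_not_mem hbX]
    exact Relation.ReflTransGen.single
      ⟨⟨a, ha, foldMap_not_mem haX⟩, ⟨b, hb, foldMap_not_mem hbX⟩, ⟨haX, hbX, hab⟩⟩

end AES

end FoldProof2
section FoldProof3

open Relation AES

variable {E : Type*} {Λ : Type*} {A : AES E Λ} {X : Set E}

namespace AES

lemma fold_transGen_pull (hA : A.IsAES) {C : Set E}
    {u v : Option E} (h : Relation.TransGen (RelRestrict (A.foldAc X) (foldMap X '' C)) u v) :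
    ∀ a b, a ∈ C → b ∈ C → foldMap X a = u → foldMap X b = v →
      Relation.TransGen (RelRestrict A.ac C) a b := by
  induction h with
  | single h =>
      intro a b ha hb hau hbv
      subst hau; subst hbv
      exact Relation.TransGen.single ⟨ha, hb, fold_ac_pull hA ha hb h.2.2⟩
  | @tail w v h1 h2 ih =>
      intro a b ha hb hau hbv
      obtain ⟨c, hcC, hcw⟩ := h2.1
      subst hbv
      refine Relation.TransGen.tail (ih a c ha hcC hau hcw) ⟨hcC, hb, ?_⟩
      exact fold_ac_pull hA hcC hb (by rw [hcw]; exact h2.2.2)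

lemma fold_image_acyclic (hA : A.IsAES) {C : Set E} (hC : A.Config C) :
    AcyclicOn (A.foldAc X) (foldMap X '' C) := by
  intro u hu
  obtain ⟨a, ha, hau⟩ := (transGen_restrict_mem hu).1
  exact hC.2.2 a (fold_transGen_pull hA hu a a ha ha hau hau)

lemma foldMap_injOn (hA : A.IsAES) (hS : A.Similar X) {C : Set E} (hC : A.Config C) :
    Set.InjOn (foldMap X) C := by
  intro a ha b hb h
  by_cases haX : a ∈ X <;> by_cases hbX : b ∈ X
  · exact rep_unique hA hS hC ha haX hb hbX
  · rw [foldMap_mem haX, foldMap_not_mem hbX] at h; exact absurd h.symm (by simp)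
  · rw [foldMap_not_mem haX, foldMap_mem hbX] at h; exact absurd h (by simp)
  · rw [foldMap_not_mem haX, foldMap_not_mem hbX] at h; injection h

lemma fold_rt_push (hA : A.IsAES) (hS : A.Similar X) {C : Set E} (hC : A.Config C)
    {a b : E} (h : Relation.ReflTransGen (RelRestrict A.ac C) a b) :
    Relation.ReflTransGen (RelRestrict (A.foldAc X) (foldMap X '' C))
      (foldMap X a) (foldMap X b) := by
  induction h with
  | refl => exact Relation.ReflTransGen.refl
  | tail h1 h2 ih => exact ih.trans (fold_ac_push hA hS hC h2.1 h2.2.1 h2.2.2)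

lemma fold_rt_pull (hA : A.IsAES) (hS : A.Similar X) {C : Set E} (hC : A.Config C)
    {a b : E} (ha : a ∈ C) (hb : b ∈ C)
    (h : Relation.ReflTransGen (RelRestrict (A.foldAc X) (foldMap X '' C))
      (foldMap X a) (foldMap X b)) :
    Relation.ReflTransGen (RelRestrict A.ac C) a b := by
  rcases (Relation.reflTransGen_iff_eq_or_transGen.mp h) with heq | htg
  · have hab : a = b := foldMap_injOn hA hS hC ha hb heq.symm
    rw [hab]
  · exact (fold_transGen_pull hA htg a b ha hb rfl rfl).to_reflTransGen

lemma fold_image_closed (hA : A.IsAES) {C : Set E} (hC : A.Config C) :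
    ∀ u ∈ foldMap X '' C, ∀ v ∈ foldCarrier X, A.foldLe X v u → v ∈ foldMap X '' C := by
  rintro u ⟨a, ha, rfl⟩ v hv hle
  rcases hv with hv | ⟨z, hzX, hv⟩
  · -- v = none
    subst hv
    by_cases haX : a ∈ X
    · exact ⟨a, ha, foldMap_mem haX⟩
    · rw [foldMap_not_mem haX] at hle
      obtain ⟨-, e', he'X, hlt⟩ := hle
      exact ⟨e', hC.2.1 a ha hlt.1, foldMap_mem he'X⟩
  · subst hv
    by_cases haX : a ∈ X
    · rw [foldMap_mem haX] at hle
      have hlt : A.lt z a := hle a haX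
      exact ⟨z, hC.2.1 a ha hlt.1, foldMap_not_mem hzX⟩
    · rw [foldMap_not_mem haX] at hle
      exact ⟨z, hC.2.1 a ha hle.2.2, foldMap_not_mem hzX⟩

lemma fold_image_config [Inhabited Λ] (hA : A.IsAES) {C : Set E} (hC : A.Config C) :
    (A.foldES X).Config (foldMap X '' C) := by
  refine ⟨?_, hC.1.image _, ?_, fold_image_acyclic hA hC⟩
  · rintro u ⟨a, ha, rfl⟩
    by_cases haX : a ∈ X
    · rw [foldMap_mem haX]; exact Or.inl rfl
    · rw [foldMap_not_mem haX]; exact Or.inr ⟨a, haX, rfl⟩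
  · exact fun u hu v hv hle => fold_image_closed hA hC u hu v hv hle

open Classical in
lemma foldLab_foldMap [Inhabited Λ] (hS : A.Similar X) (e : E) :
    A.foldLab X (foldMap X e) = A.lab e := by
  by_cases he : e ∈ X
  · rw [foldMap_mem he]
    have hne : X.Nonempty := ⟨e, he⟩
    show (if h : X.Nonempty then A.lab h.some else default) = A.lab e
    rw [dif_pos hne]
    exact (hS hne.some hne.some_mem e he).1
  · rw [foldMap_not_mem he]; rfl

lemma fold_iso [Inhabited Λ] (hA : A.IsAES) (hS : A.Similar X) {C : Set E}
    (hC : A.Config C) :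
    IsPosetIso A.toES (A.foldES X) C (foldMap X '' C) (foldMap X) := by
  refine ⟨foldMap_injOn hA hS hC, rfl, fun e he => foldLab_foldMap hS e, ?_⟩
  intro e he e' he'
  constructor
  · exact fun h => fold_rt_push hA hS hC h
  · exact fun h => fold_rt_pull hA hS hC he he' h

lemma toES_config_iff {C : Set E} : A.toES.Config C ↔ A.Config C := by
  constructor
  · intro h
    exact ⟨h.2.1, fun x hx z hz => h.2.2.1 x hx z (Set.mem_univ z) hz, h.2.2.2⟩
  · intro h
    exact ⟨Set.subset_univ C, h.1, fun x hx y _ hle => h.2.1 x hx hle, h.2.2⟩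

end AES

end FoldProof3
section FoldProof4

open Relation AES

variable {E : Type*} {Λ : Type*} {A : AES E Λ} {X : Set E}

namespace AES

lemma backward_some [Inhabited Λ] (hA : A.IsAES) (hS : A.Similar X) {C : Set E}
    (hC : A.Config C) {e : E} (heX : e ∉ X) (heC : e ∉ C)
    (hcfg : (A.foldES X).Config (foldMap X '' C ∪ {some e}))
    (hext : ∀ u ∈ foldMap X '' C, ¬ A.foldAc X (some e) u) :
    A.Config (C ∪ {e}) := by
  have hsomee : (some e) ∈ foldMap X '' C ∪ {some e} := Set.mem_union_right _ rfl
  have hclos : A.causes e ⊆ C ∪ {e} := by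
    intro z hz
    rcases eq_or_ne z e with rfl | hne
    · exact Set.mem_union_right _ rfl
    have hltze : A.lt z e := ⟨hz, hne⟩
    by_cases hzX : z ∈ X
    · have hle1 : A.foldLe X none (some e) := ⟨heX, z, hzX, hltze⟩
      have hnone := hcfg.2.2.1 (some e) hsomee none (Or.inl rfl) hle1
      rcases hnone with hnone | hnone
      swap
      · exact absurd hnone (by simp)
      obtain ⟨x, hxC, hxn⟩ := hnone
      have hxX : x ∈ X := foldMap_eq_none hxn
      rcases eq_or_ne z x with rfl | hzx
      · exact Set.mem_union_left _ hxC
      exfalso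
      have hconf : A.Conflict z x := (hS z hzX x hxX).2.1 hzx
      have hcyc : ¬ AcyclicOn A.ac (A.causes e ∪ A.causes x) := by
        intro hacy
        exact conflict_cyclic hA hconf (acyclicOn_mono
          (Set.union_subset_union_left _ (fun w hw => hA.le_trans w z e hw hz)) hacy)
      have hace : A.ac e x := hA.cyclic_ac e x hcyc
      by_cases hmu : A.acMu e x
      · have haez : A.ac e z := ((hS x hxX z hzX).2.2 e heX).2 hmu
        exact ac_irrefl hA e (hA.ac_heredity e z e haez hltze)
      · rw [AES.acMu, not_and_or, not_not] at hmu
        obtain ⟨c, hac, hltcx⟩ := hmu.resolve_left (not_not_intro hace)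
        have hcC : c ∈ C := hC.2.1 x hxC hltcx.1
        have hcX : c ∉ X := fun h => cause_in_X_absurd hA hS hC hxC hxX h hltcx
        exact hext (some c) ⟨c, hcC, foldMap_not_mem hcX⟩ ⟨heX, hcX, hac⟩
    · have hle1 : A.foldLe X (some z) (some e) := ⟨hzX, heX, hz⟩
      have hsz := hcfg.2.2.1 (some e) hsomee (some z) (Or.inr ⟨z, hzX, rfl⟩) hle1
      rcases hsz with hsz | hsz
      · obtain ⟨c, hcC, hcz⟩ := hsz
        have h3 := (foldMap_eq_some hcz).2
        subst h3
        exact Set.mem_union_left _ hcC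
      · exfalso
        rw [Set.mem_singleton_iff] at hsz
        injection hsz with h
        exact hne h
  have hout : ∀ c ∈ C, ¬ A.ac e c := by
    intro c hcC hac
    by_cases hcX : c ∈ X
    · by_cases hmu : A.acMu e c
      · have hall : ∀ x' ∈ X, A.ac e x' := fun x' hx' =>
          ((hS c hcX x' hx').2.2 e heX).2 hmu
        exact hext none ⟨c, hcC, foldMap_mem hcX⟩ ⟨heX, hall⟩
      · rw [AES.acMu, not_and_or, not_not] at hmu
        obtain ⟨c', hac', hlt'⟩ := hmu.resolve_left (not_not_intro hac)
        have hc'C : c' ∈ C := hC.2.1 c hcC hlt'.1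
        have hc'X : c' ∉ X := fun h => cause_in_X_absurd hA hS hC hcC hcX h hlt'
        exact hext (some c') ⟨c', hc'C, foldMap_not_mem hc'X⟩ ⟨heX, hc'X, hac'⟩
    · exact hext (some c) ⟨c, hcC, foldMap_not_mem hcX⟩ ⟨heX, hcX, hac⟩
  refine ⟨hC.1.union (Set.finite_singleton e), ?_,
    acyclic_insert hC.2.2 (ac_irrefl hA e) hout⟩
  intro w hw
  rcases hw with hw | hw
  · exact fun z hz => Set.mem_union_left _ (hC.2.1 w hw hz)
  · rw [Set.mem_singleton_iff] at hw; subst hw; exact hclos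

lemma backward_none [Inhabited Λ] (hA : A.IsAES) (hXc : A.Combinable X) {C : Set E}
    (hC : A.Config C) (hCX : ∀ x ∈ X, x ∉ C)
    (hcfg : (A.foldES X).Config (foldMap X '' C ∪ {none}))
    (hext : ∀ u ∈ foldMap X '' C, ¬ A.foldAc X none u) :
    ∃ x ∈ X, A.Config (C ∪ {x}) := by
  obtain ⟨hS, hcomb⟩ := hXc
  have hYsub : A.weakPred X ∩ C ⊆ A.weakPred X := Set.inter_subset_left
  have hYcons : A.ConsistentSet (A.weakPred X ∩ C) := by
    intro a ha b hb hconf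
    exact config_no_conflict hA hC _ hconf
      (Set.insert_subset ha.2 (Set.singleton_subset_iff.mpr hb.2))
  obtain ⟨x, hxX, hxY, h, hh, hsub⟩ := hcomb _ hYsub hYcons
  have hSC : A.strictCauses X ⊆ C := by
    intro s hs
    have hsX : s ∉ X := fun hsx => (hs s hsx).2 rfl
    have hle1 : A.foldLe X (some s) none := hs
    have h2 := hcfg.2.2.1 none (Set.mem_union_right _ rfl) (some s)
      (Or.inr ⟨s, hsX, rfl⟩) hle1
    rcases h2 with h2 | h2
    · obtain ⟨c, hcC, hcs⟩ := h2
      have h3 := (foldMap_eq_some hcs).2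
      subst h3
      exact hcC
    · exact absurd h2 (by simp)
  obtain ⟨C', hC', hxC', hhist⟩ := hh
  have hclos : A.causes x ⊆ C ∪ {x} := by
    intro z hz
    rcases eq_or_ne z x with rfl | hne
    · exact Set.mem_union_right _ rfl
    have hzC' : z ∈ C' := hC'.2.1 x hxC' hz
    have hzh : z ∈ h := by
      rw [hhist]
      exact ⟨hzC', Relation.ReflTransGen.single ⟨hzC', hxC', hA.lt_ac z x ⟨hz, hne⟩⟩⟩
    have hzs : z ∈ A.strictCauses X ∪ A.causesSet (A.weakPred X ∩ C) := hsub ⟨hzh, hne⟩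
    rcases hzs with hzs | hzs
    · exact Set.mem_union_left _ (hSC hzs)
    · rw [AES.causesSet, Set.mem_iUnion₂] at hzs
      obtain ⟨y, hyY, hzy⟩ := hzs
      exact Set.mem_union_left _ (hC.2.1 y hyY.2 hzy)
  have hout : ∀ c ∈ C, ¬ A.ac x c := by
    intro c hcC hac
    have hcX : c ∉ X := fun hcx => hCX c hcx hcC
    by_cases hall : ∀ x' ∈ X, A.ac x' c
    · exact hext (some c) ⟨c, hcC, foldMap_not_mem hcX⟩ ⟨hcX, hall⟩
    · push_neg at hall
      obtain ⟨x0, hx0X, hnac⟩ := hall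
      have hcax : A.ac c x := (((hS x hxX x0 hx0X).2.2 c hcX).1 hac).resolve_left hnac
      have hcW : c ∈ A.weakPred X := by
        refine ⟨⟨x, hxX, x0, hx0X, hcax, hnac⟩, ?_⟩
        rintro (hcs | hcx')
        · exact ac_irrefl hA x (hA.ac_heredity x c x hac (hcs x hxX))
        · exact hcX hcx'
      exact hxY c ⟨hcW, hcC⟩ hac
  refine ⟨x, hxX, hC.1.union (Set.finite_singleton x), ?_,
    acyclic_insert hC.2.2 (ac_irrefl hA x) hout⟩
  intro w hw
  rcases hw with hw | hw
  · exact fun z hz => Set.mem_union_left _ (hC.2.1 w hw hz)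
  · rw [Set.mem_singleton_iff] at hw; subst hw; exact hclos

end AES

end FoldProof4
open AES in
/-- an AES and its folding on a combinable set of events are
history preserving bisimilar. -/
theorem aes_folding_hp_bisimilar
    {E Λ : Type*} [Inhabited Λ] (A : AES E Λ) (hA : A.IsAES)
    (X : Set E) (hX : A.Combinable X) :
    ∃ R : Set (Set E × (E → Option E) × Set (Option E)),
      IsHpBisim A.toES (A.foldES X) R := by
  have hS : A.Similar X := hX.1
  have hempty : A.Config (∅ : Set E) :=
    ⟨Set.finite_empty, fun e he => absurd he (Set.notMem_empty e),
      fun x hx => absurd (transGen_restrict_mem hx).1 (Set.notMem_empty x)⟩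
  refine ⟨{t | A.Config t.1 ∧ t.2.1 = foldMap X ∧ t.2.2 = foldMap X '' t.1}, ?_, ?_, ?_⟩
  · rintro ⟨C, g, C₂⟩ ⟨hC, hg, hC₂⟩
    dsimp only at hC hg hC₂ ⊢
    subst hg; subst hC₂
    exact ⟨toES_config_iff.mpr hC, fold_image_config hA hC, fold_iso hA hS hC⟩
  · exact ⟨foldMap X, hempty, rfl, by simp⟩
  · rintro C₁ g C₂ ⟨hC, hg, hC₂⟩
    dsimp only at hC hg hC₂
    subst hg; subst hC₂
    constructor
    · -- forward direction
      intro e₁ _ _ hcfg₁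
      have hcfg : A.Config (C₁ ∪ {e₁}) := toES_config_iff.mp hcfg₁
      refine ⟨foldMap X e₁, ?_, ?_, foldMap X, fun x _ => rfl, hcfg, rfl, ?_⟩
      · by_cases h : e₁ ∈ X
        · rw [foldMap_mem h]; exact Or.inl rfl
        · rw [foldMap_not_mem h]; exact Or.inr ⟨e₁, h, rfl⟩
      · exact foldLab_foldMap hS e₁
      · dsimp only
        rw [Set.image_union, Set.image_singleton]
    · -- backward direction
      intro e₂ hcar hext hcfg₂
      by_cases hmem : e₂ ∈ foldMap X '' C₁
      · obtain ⟨e₁, he₁, hfe⟩ := hmem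
        have h1 : C₁ ∪ {e₁} = C₁ := by
          rw [Set.union_singleton, Set.insert_eq_self]; exact he₁
        refine ⟨e₁, Set.mem_univ e₁, ?_, foldMap X, fun x _ => rfl, ?_, rfl, ?_⟩
        · rw [← hfe]; exact (foldLab_foldMap hS e₁).symm
        · rw [h1]; exact hC
        · dsimp only
          rw [h1, ← hfe, Set.union_singleton]
          exact Set.insert_eq_self.mpr ⟨e₁, he₁, rfl⟩
      · have hext' : ∀ u ∈ foldMap X '' C₁, ¬ A.foldAc X e₂ u := fun u hu =>
          hext.2 u hu e₂ (Set.mem_union_right _ rfl) hmem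
        rcases hcar with hnone | ⟨e, heX, hsome⟩
        · subst hnone
          have hCX : ∀ x ∈ X, x ∉ C₁ := fun x hx hxC => hmem ⟨x, hxC, foldMap_mem hx⟩
          obtain ⟨x, hxX, hcfg'⟩ := backward_none hA hX hC hCX hcfg₂ hext'
          refine ⟨x, Set.mem_univ x, ?_, foldMap X, fun y _ => rfl, hcfg', rfl, ?_⟩
          · have h2 := foldLab_foldMap hS x
            rw [foldMap_mem hxX] at h2
            exact h2.symm
          · dsimp only
            rw [Set.image_union, Set.image_singleton, foldMap_mem hxX]
        · subst hsome
          have heC : e ∉ C₁ := fun h => hmem ⟨e, h, foldMap_not_mem heX⟩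
          have hcfg' := backward_some hA hS hC heX heC hcfg₂ hext'
          refine ⟨e, Set.mem_univ e, rfl, foldMap X, fun y _ => rfl, hcfg', rfl, ?_⟩
          dsimp only
          rw [Set.image_union, Set.image_singleton, foldMap_not_mem heX]
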